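/- Let X be a complex Banach space and (b_n)_{n≥1} a bounded sequence in X; set D := max{sup_n ‖b_n‖, 1} and a_n := b_n/n for every n ≥ 1. Then for every t > 0 and every x with 0 < x ≤ e^t one has ‖e^{-xt} ∑_{n : log n < t} n^x a_n‖ ≤ D·e/x, where the sum runs over all natural numbers n ≥ 1 with log n < t. -/

import Mathlib

private lemma aux1 {x : ℝ} (hx : 1 ≤ x) {m : ℝ} (hm : 1 ≤ m) :
    m ^ x + x * m ^ (x - 1) ≤ (m + 1) ^ x := by
  have hm0 : (0 : ℝ) < m := lt_of_lt_of_le one_pos hm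
  have hs : (-1 : ℝ) ≤ 1 / m := le_trans (by norm_num : (-1:ℝ) ≤ 0) (by positivity)
  have h := one_add_mul_self_le_rpow_one_add hs hx
  have e1 : (1 : ℝ) + 1 / m = (m + 1) / m := by field_simp
  rw [e1, Real.div_rpow (by positivity) hm0.le] at h
  have h2 := (le_div_iff₀ (Real.rpow_pos_of_pos hm0 x)).mp h
  have hrw : m ^ (x - 1) = m ^ x / m := by rw [Real.rpow_sub hm0, Real.rpow_one]
  calc m ^ x + x * m ^ (x - 1) = (1 + x * (1 / m)) * m ^ x := by
        rw [hrw]; field_simp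
    _ ≤ (m + 1) ^ x := h2

private lemma aux2 {x : ℝ} (hx0 : 0 ≤ x) (hx : x ≤ 1) {m : ℝ} (hm : 1 ≤ m) :
    (m - 1) ^ x + x * m ^ (x - 1) ≤ m ^ x := by
  have hm0 : (0 : ℝ) < m := lt_of_lt_of_le one_pos hm
  have hs : (-1 : ℝ) ≤ -(1 / m) := by
    have : 1 / m ≤ 1 := by rw [div_le_one hm0]; exact hm
    linarith
  have h := rpow_one_add_le_one_add_mul_self hs hx0 hx
  have e1 : (1 : ℝ) + -(1 / m) = (m - 1) / m := by field_simp; ring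
  rw [e1, Real.div_rpow (by linarith) hm0.le] at h
  have h2 := (div_le_iff₀ (Real.rpow_pos_of_pos hm0 x)).mp h
  have hrw : m ^ (x - 1) = m ^ x / m := by rw [Real.rpow_sub hm0, Real.rpow_one]
  have e2 : (1 + x * -(1 / m)) * m ^ x = m ^ x - x * m ^ (x - 1) := by
    rw [hrw]; field_simp; ring
  linarith [e2 ▸ h2]

private lemma sum_aux {x : ℝ} (hx : 0 < x) (N : ℕ) :
    ∑ n ∈ Finset.Icc 1 N, (n : ℝ) ^ (x - 1) ≤ ((N : ℝ) + 1) ^ x / x := by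
  rcases le_total 1 x with h1 | h1
  · have key : ∑ n ∈ Finset.Icc 1 N, (n : ℝ) ^ (x - 1) ≤ (((N : ℝ) + 1) ^ x - 1) / x := by
      induction N with
      | zero => simp [Real.one_rpow]
      | succ N ih =>
        rw [Finset.sum_Icc_succ_top (by omega)]
        push_cast
        have hN1 : (1 : ℝ) ≤ (N : ℝ) + 1 := by
          have := Nat.cast_nonneg (α := ℝ) N; linarith
        have hb := aux1 h1 hN1
        have e : (((N : ℝ) + 1) ^ x - 1) / x + ((N : ℝ) + 1) ^ (x - 1)
            = (((N : ℝ) + 1) ^ x - 1 + x * ((N : ℝ) + 1) ^ (x - 1)) / x := by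
          field_simp
        calc ∑ n ∈ Finset.Icc 1 N, (n : ℝ) ^ (x - 1) + ((N : ℝ) + 1) ^ (x - 1)
            ≤ (((N : ℝ) + 1) ^ x - 1) / x + ((N : ℝ) + 1) ^ (x - 1) := by linarith
          _ = (((N : ℝ) + 1) ^ x - 1 + x * ((N : ℝ) + 1) ^ (x - 1)) / x := e
          _ ≤ (((N : ℝ) + 1 + 1) ^ x - 1) / x := by
              rw [div_le_div_iff_of_pos_right hx]; linarith
    refine key.trans ?_
    rw [div_le_div_iff_of_pos_right hx]
    linarith
  · have key : ∑ n ∈ Finset.Icc 1 N, (n : ℝ) ^ (x - 1) ≤ (N : ℝ) ^ x / x := by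
      induction N with
      | zero => simp [Real.zero_rpow hx.ne']
      | succ N ih =>
        rw [Finset.sum_Icc_succ_top (by omega)]
        push_cast
        have hN1 : (1 : ℝ) ≤ (N : ℝ) + 1 := by
          have := Nat.cast_nonneg (α := ℝ) N; linarith
        have hb := aux2 hx.le h1 hN1
        have hsimp : (N : ℝ) + 1 - 1 = (N : ℝ) := by ring
        rw [hsimp] at hb
        have e : (N : ℝ) ^ x / x + ((N : ℝ) + 1) ^ (x - 1)
            = ((N : ℝ) ^ x + x * ((N : ℝ) + 1) ^ (x - 1)) / x := by
          field_simp
        calc ∑ n ∈ Finset.Icc 1 N, (n : ℝ) ^ (x - 1) + ((N : ℝ) + 1) ^ (x - 1)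
            ≤ (N : ℝ) ^ x / x + ((N : ℝ) + 1) ^ (x - 1) := by linarith
          _ = ((N : ℝ) ^ x + x * ((N : ℝ) + 1) ^ (x - 1)) / x := e
          _ ≤ ((N : ℝ) + 1) ^ x / x := by
              rw [div_le_div_iff_of_pos_right hx]; linarith
    refine key.trans ?_
    rw [div_le_div_iff_of_pos_right hx]
    exact Real.rpow_le_rpow (by positivity) (by linarith) hx.le

theorem stmt_11 {X : Type*} [NormedAddCommGroup X] [NormedSpace ℂ X] [CompleteSpace X]
    (b : ℕ → X) (hbdd : BddAbove (Set.range fun n : ℕ => ‖b (n + 1)‖))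
    (D : ℝ) (hD : D = max (⨆ n : ℕ, ‖b (n + 1)‖) 1)
    (a : ℕ → X) (ha : ∀ n : ℕ, 1 ≤ n → a n = ((n : ℝ)⁻¹) • b n) :
    ∀ t : ℝ, 0 < t → ∀ x : ℝ, 0 < x → x ≤ Real.exp t →
      ‖Real.exp (-x * t) •
          ∑ n ∈ (Finset.Icc 1 ⌊Real.exp t⌋₊).filter (fun n : ℕ => Real.log (n : ℝ) < t),
            ((n : ℝ) ^ x) • a n‖
        ≤ D * Real.exp 1 / x := by
  intro t ht x hx hxt
  set N := ⌊Real.exp t⌋₊ with hN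
  have hD1 : (1 : ℝ) ≤ D := hD ▸ le_max_right _ _
  have hD0 : (0 : ℝ) ≤ D := by linarith
  have hterm : ∀ n ∈ Finset.Icc 1 N, ‖((n : ℝ) ^ x) • a n‖ ≤ D * (n : ℝ) ^ (x - 1) := by
    intro n hn
    have hn1 : 1 ≤ n := (Finset.mem_Icc.mp hn).1
    have hn0 : (0 : ℝ) < (n : ℝ) := by exact_mod_cast hn1
    have hbn : ‖b n‖ ≤ D := by
      have h1 : ‖b ((n - 1) + 1)‖ ≤ ⨆ k : ℕ, ‖b (k + 1)‖ := le_ciSup hbdd (n - 1)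
      rw [Nat.sub_add_cancel hn1] at h1
      exact h1.trans (hD ▸ le_max_left _ _)
    rw [ha n hn1, norm_smul, norm_smul]
    rw [Real.norm_eq_abs, Real.norm_eq_abs, abs_of_pos (Real.rpow_pos_of_pos hn0 x),
      abs_of_pos (by positivity : (0:ℝ) < (n:ℝ)⁻¹)]
    have hpow : (n : ℝ) ^ (x - 1) = (n : ℝ) ^ x / n := by
      rw [Real.rpow_sub hn0, Real.rpow_one]
    have hpos : (0 : ℝ) ≤ (n : ℝ) ^ (x - 1) := (Real.rpow_pos_of_pos hn0 _).le
    calc (n : ℝ) ^ x * ((n : ℝ)⁻¹ * ‖b n‖) = (n : ℝ) ^ (x - 1) * ‖b n‖ := by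
          rw [hpow]; ring
      _ ≤ (n : ℝ) ^ (x - 1) * D := mul_le_mul_of_nonneg_left hbn hpos
      _ = D * (n : ℝ) ^ (x - 1) := by ring
  have hsum : ‖∑ n ∈ (Finset.Icc 1 N).filter (fun n : ℕ => Real.log (n : ℝ) < t),
      ((n : ℝ) ^ x) • a n‖ ≤ D * (((N : ℝ) + 1) ^ x / x) := by
    calc ‖∑ n ∈ (Finset.Icc 1 N).filter (fun n : ℕ => Real.log (n : ℝ) < t),
          ((n : ℝ) ^ x) • a n‖
        ≤ ∑ n ∈ (Finset.Icc 1 N).filter (fun n : ℕ => Real.log (n : ℝ) < t),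
          ‖((n : ℝ) ^ x) • a n‖ := norm_sum_le _ _
      _ ≤ ∑ n ∈ (Finset.Icc 1 N).filter (fun n : ℕ => Real.log (n : ℝ) < t),
          D * (n : ℝ) ^ (x - 1) :=
          Finset.sum_le_sum fun n hn => hterm n (Finset.filter_subset _ _ hn)
      _ ≤ ∑ n ∈ Finset.Icc 1 N, D * (n : ℝ) ^ (x - 1) := by
          refine Finset.sum_le_sum_of_subset_of_nonneg (Finset.filter_subset _ _) ?_
          intro n hn _
          have hn1 : 1 ≤ n := (Finset.mem_Icc.mp hn).1
          have hn0 : (0 : ℝ) < (n : ℝ) := by exact_mod_cast hn1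
          positivity
      _ = D * ∑ n ∈ Finset.Icc 1 N, (n : ℝ) ^ (x - 1) := by rw [Finset.mul_sum]
      _ ≤ D * (((N : ℝ) + 1) ^ x / x) := mul_le_mul_of_nonneg_left (sum_aux hx N) hD0
  have hkey : Real.exp (-x * t) * ((N : ℝ) + 1) ^ x ≤ Real.exp 1 := by
    have hNle : (N : ℝ) ≤ Real.exp t := Nat.floor_le (Real.exp_pos t).le
    have h1 : (N : ℝ) + 1 ≤ Real.exp (t + Real.exp (-t)) := by
      rw [Real.exp_add]
      have hb := Real.add_one_le_exp (Real.exp (-t))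
      have he : Real.exp t * Real.exp (-t) = 1 := by rw [← Real.exp_add]; simp
      nlinarith [Real.exp_pos t, Real.exp_pos (-t)]
    have h2 : ((N : ℝ) + 1) ^ x ≤ Real.exp (t + Real.exp (-t)) ^ x :=
      Real.rpow_le_rpow (by positivity) h1 hx.le
    rw [← Real.exp_mul] at h2
    have h3 : x * Real.exp (-t) ≤ 1 := by
      have := mul_le_mul_of_nonneg_right hxt (Real.exp_pos (-t)).le
      rw [← Real.exp_add] at this
      simpa using this
    calc Real.exp (-x * t) * ((N : ℝ) + 1) ^ x
        ≤ Real.exp (-x * t) * Real.exp ((t + Real.exp (-t)) * x) :=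
          mul_le_mul_of_nonneg_left h2 (Real.exp_pos _).le
      _ = Real.exp (-x * t + (t + Real.exp (-t)) * x) := by rw [← Real.exp_add]
      _ = Real.exp (x * Real.exp (-t)) := by ring_nf
      _ ≤ Real.exp 1 := Real.exp_le_exp.mpr h3
  rw [norm_smul, Real.norm_eq_abs, Real.abs_exp]
  calc Real.exp (-x * t) * ‖∑ n ∈ (Finset.Icc 1 N).filter (fun n : ℕ => Real.log (n : ℝ) < t),
        ((n : ℝ) ^ x) • a n‖
      ≤ Real.exp (-x * t) * (D * (((N : ℝ) + 1) ^ x / x)) :=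
        mul_le_mul_of_nonneg_left hsum (Real.exp_pos _).le
    _ = (Real.exp (-x * t) * ((N : ℝ) + 1) ^ x) * D / x := by ring
    _ ≤ Real.exp 1 * D / x := by gcongr
    _ = D * Real.exp 1 / x := by ring
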